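/- arXiv:1509.01384 — 3 statements merged into one kernel-verified Lean document; each statement's English description precedes it below -/
import Mathlib

section
/- Let f : [a,b] → ℝ be twice continuously differentiable. Then the error of the one-step trapezoidal rule satisfies |∫_a^b f(x) dx − (b−a)/2 · (f(a) + f(b))| ≤ (b−a)³/12 · sup_{x ∈ [a,b]} |f''(x)|. -/
open MeasureTheory Set intervalIntegral

/-- One-step trapezoidal rule error bound: for `f` twice continuously differentiable on
`[a,b]`, `|∫_a^b f − (b−a)/2·(f a + f b)| ≤ (b−a)³/12 · sup_{x∈[a,b]} |f''(x)|`. -/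
theorem trapezoid_one_step_error (a b : ℝ) (hab : a < b) (f : ℝ → ℝ)
    (hf : ContDiffOn ℝ 2 f (Set.Icc a b)) :
    |(∫ x in a..b, f x) - (b - a) / 2 * (f a + f b)| ≤
      (b - a) ^ 3 / 12 * ⨆ x : Set.Icc a b, |iteratedDerivWithin 2 f (Set.Icc a b) x| := by
  have hab' : a ≤ b := hab.le
  set s := Set.Icc a b with hs_def
  have hs : UniqueDiffOn ℝ s := uniqueDiffOn_Icc hab
  set f₁ := derivWithin f s with hf₁_def
  set f₂ := derivWithin f₁ s with hf₂_def
  -- iterated deriv = f₂ on s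
  have hiter : ∀ x ∈ s, iteratedDerivWithin 2 f s x = f₂ x := by
    intro x hx
    rw [show (2:ℕ) = 1 + 1 from rfl, iteratedDerivWithin_succ', iteratedDerivWithin_one]
  have hf₁cd : ContDiffOn ℝ 1 f₁ s := hf.derivWithin hs (by norm_num)
  have hf₁cont : ContinuousOn f₁ s := hf₁cd.continuousOn
  have hf₂cont : ContinuousOn f₂ s := hf₁cd.continuousOn_derivWithin hs le_rfl
  have hfcont : ContinuousOn f s := hf.continuousOn
  have hfd : DifferentiableOn ℝ f s := hf.differentiableOn (by norm_num)
  have hf₁d : DifferentiableOn ℝ f₁ s := hf₁cd.differentiableOn one_ne_zero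
  -- derivative facts at interior points
  have hmem : ∀ x ∈ Set.Ioo a b, s ∈ nhds x := fun x hx => Icc_mem_nhds hx.1 hx.2
  have hfderiv : ∀ x ∈ Set.Ioo a b, HasDerivAt f (f₁ x) x := fun x hx =>
    ((hfd x (Set.Ioo_subset_Icc_self hx)).hasDerivWithinAt).hasDerivAt (hmem x hx)
  have hf₁deriv : ∀ x ∈ Set.Ioo a b, HasDerivAt f₁ (f₂ x) x := fun x hx =>
    ((hf₁d x (Set.Ioo_subset_Icc_self hx)).hasDerivWithinAt).hasDerivAt (hmem x hx)
  -- auxiliary function for integration by parts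
  set u : ℝ → ℝ := fun x => (x - a) * (b - x) with hu_def
  set g : ℝ → ℝ := fun x => u x * f₁ x - (a + b - 2 * x) * f x with hg_def
  have hgderiv : ∀ x ∈ Set.Ioo a b, HasDerivAt g (u x * f₂ x + 2 * f x) x := by
    intro x hx
    have hu : HasDerivAt u (a + b - 2 * x) x := by
      have h : HasDerivAt u _ x := ((hasDerivAt_id x).sub_const a).mul ((hasDerivAt_const x b).sub (hasDerivAt_id x))
      simp only [id_eq] at h
      convert h using 1; ring
    have hv : HasDerivAt (fun y => a + b - 2 * y) (-2) x := by
      have h : HasDerivAt (fun y => a + b - 2 * y) _ x := (hasDerivAt_const x (a + b)).sub ((hasDerivAt_id x).const_mul 2)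
      convert h using 1; ring
    have h1 : HasDerivAt (fun y => u y * f₁ y)
        ((a + b - 2 * x) * f₁ x + u x * f₂ x) x := hu.mul (hf₁deriv x hx)
    have h2 : HasDerivAt (fun y => (a + b - 2 * y) * f y)
        ((-2) * f x + (a + b - 2 * x) * f₁ x) x := hv.mul (hfderiv x hx)
    have : HasDerivAt g _ x := h1.sub h2
    convert this using 1; ring
  have hgcont : ContinuousOn g s := by
    apply ContinuousOn.sub
    · exact (continuousOn_id.sub continuousOn_const).mul
        (continuousOn_const.sub continuousOn_id) |>.mul hf₁cont
    · exact ((continuousOn_const.sub (continuousOn_const.mul continuousOn_id))).mul hfcont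
  have hucont : Continuous u := by fun_prop
  have huf₂int : IntervalIntegrable (fun x => u x * f₂ x) volume a b := by
    apply ContinuousOn.intervalIntegrable
    rw [Set.uIcc_of_le hab']
    exact hucont.continuousOn.mul hf₂cont
  have hfint : IntervalIntegrable f volume a b := by
    apply ContinuousOn.intervalIntegrable
    rw [Set.uIcc_of_le hab']
    exact hfcont
  have hgint : IntervalIntegrable (fun x => u x * f₂ x + 2 * f x) volume a b :=
    huf₂int.add (hfint.const_mul 2)
  have key : ∫ x in a..b, (u x * f₂ x + 2 * f x) = g b - g a := by
    apply intervalIntegral.integral_eq_sub_of_hasDeriv_right_of_le hab' hgcont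
      (fun x hx => (hgderiv x hx).hasDerivWithinAt) hgint
  have hga : g a = -((b - a) * f a) := by simp only [hg_def, hu_def]; ring
  have hgb : g b = (b - a) * f b := by simp only [hg_def, hu_def]; ring
  rw [intervalIntegral.integral_add huf₂int (hfint.const_mul 2), hga, hgb,
    intervalIntegral.integral_const_mul] at key
  -- so the error equals -1/2 ∫ u f₂
  have herr : (∫ x in a..b, f x) - (b - a) / 2 * (f a + f b)
      = -(1/2) * ∫ x in a..b, u x * f₂ x := by linarith [key]
  -- supremum bound
  set M := ⨆ x : Set.Icc a b, |iteratedDerivWithin 2 f (Set.Icc a b) x| with hM_def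
  haveI : Nonempty (Set.Icc a b) := ⟨⟨a, le_refl a, hab'⟩⟩
  have hbdd : BddAbove (Set.range fun x : Set.Icc a b => |iteratedDerivWithin 2 f (Set.Icc a b) x|) := by
    have h := (isCompact_Icc.image_of_continuousOn
      ((hf₂cont.congr (fun x hx => (hiter x hx))).abs)).bddAbove
    rwa [Set.image_eq_range] at h
  have hMle : ∀ x ∈ s, |f₂ x| ≤ M := by
    intro x hx
    have := le_ciSup hbdd (⟨x, hx⟩ : Set.Icc a b)
    rwa [hiter x hx] at this
  have hM0 : 0 ≤ M := le_trans (abs_nonneg _) (hMle a ⟨le_refl a, hab'⟩)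
  -- bound the integral
  have huMint : IntervalIntegrable (fun x => u x * M) volume a b :=
    (hucont.intervalIntegrable a b).mul_const M
  have hintbound : |∫ x in a..b, u x * f₂ x| ≤ ∫ x in a..b, u x * M := by
    refine (intervalIntegral.abs_integral_le_integral_abs hab').trans ?_
    apply intervalIntegral.integral_mono_on hab' _ huMint
    · intro x hx
      have hu0 : 0 ≤ u x := mul_nonneg (by linarith [hx.1]) (by linarith [hx.2])
      rw [abs_mul, abs_of_nonneg hu0]
      exact mul_le_mul_of_nonneg_left (hMle x hx) hu0
    · exact huf₂int.abs
  have huint : ∫ x in a..b, u x * M = (b - a)^3 / 6 * M := by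
    have : ∀ x, u x * M = (-(x^2) + (a+b)*x - a*b) * M := by intro x; simp only [hu_def]; ring
    simp_rw [this]
    rw [intervalIntegral.integral_mul_const]
    congr 1
    have i1 : IntervalIntegrable (fun x : ℝ => -(x^2)) volume a b :=
      ((continuous_pow 2).neg).intervalIntegrable a b
    have i2 : IntervalIntegrable (fun x : ℝ => (a+b)*x) volume a b :=
      (continuous_const.mul continuous_id).intervalIntegrable a b
    have i3 : IntervalIntegrable (fun _ : ℝ => a*b) volume a b := intervalIntegrable_const
    have : (fun x : ℝ => -(x^2) + (a+b)*x - a*b) = fun x : ℝ => -(x^2) + ((a+b)*x - a*b) := by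
      ext x; ring
    rw [this, intervalIntegral.integral_add i1 (i2.sub i3), intervalIntegral.integral_sub i2 i3,
      intervalIntegral.integral_neg, integral_pow, intervalIntegral.integral_const_mul,
      integral_id, intervalIntegral.integral_const, smul_eq_mul]
    ring
  rw [herr]
  rw [abs_mul]
  calc |(-(1/2) : ℝ)| * |∫ x in a..b, u x * f₂ x| ≤ (1/2) * ((b-a)^3/6 * M) := by
        rw [show |(-(1/2):ℝ)| = 1/2 from by norm_num]
        have := hintbound.trans (le_of_eq huint)
        linarith
    _ = (b - a) ^ 3 / 12 * M := by ring
end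

section
/- For the composite trapezoidal rule on an equidistant grid with n subintervals of [a,b], the error satisfies |∫_a^b f(x) dx − (b−a)/(2n) · [f(a) + 2 Σ_{i=1}^{n−1} f(a + i(b−a)/n) + f(b)]| ≤ (b−a)³/(12 n²) · sup_{x∈[a,b]} |f''(x)|. -/
open MeasureTheory Set intervalIntegral Finset


lemma trap_single (a b : ℝ) (f f' f'' : ℝ → ℝ) (c d : ℝ) (hcd : c ≤ d)
    (hsub : Set.Icc c d ⊆ Set.Icc a b)
    (hfc : ContinuousOn f (Set.Icc a b))
    (hf'c : ContinuousOn f' (Set.Icc a b))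
    (hf''c : ContinuousOn f'' (Set.Icc a b))
    (hf : ∀ x ∈ Set.Icc a b, HasDerivWithinAt f (f' x) (Set.Icc a b) x)
    (hf' : ∀ x ∈ Set.Icc a b, HasDerivWithinAt f' (f'' x) (Set.Icc a b) x)
    (M : ℝ) (hM : ∀ x ∈ Set.Icc a b, |f'' x| ≤ M) :
    |(∫ x in c..d, f x) - (d - c) / 2 * (f c + f d)| ≤ (d - c) ^ 3 / 12 * M := by
  have hcd' : Set.Icc c d ⊆ Set.Icc a b := hsub
  have hc : c ∈ Set.Icc a b := hsub ⟨le_refl c, hcd⟩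
  have hd : d ∈ Set.Icc a b := hsub ⟨hcd, le_refl d⟩
  have hM0 : 0 ≤ M := le_trans (abs_nonneg _) (hM c hc)
  rcases eq_or_lt_of_le hcd with rfl | hlt
  · simp
  -- interior points
  have hIoo : Set.Ioo c d ⊆ Set.Ioo a b := Set.Ioo_subset_Ioo hc.1 hd.2
  set K : ℝ → ℝ := fun x => (x - c) * (d - x) / 2 with hK
  set K' : ℝ → ℝ := fun x => (c + d - 2 * x) / 2 with hK'
  set G : ℝ → ℝ := fun x => K x * f' x - K' x * f x with hG
  -- derivative of G at interior points
  have hKd : ∀ x : ℝ, HasDerivAt K (K' x) x := by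
    intro x
    have h1 := (((hasDerivAt_id x).sub_const c).mul ((hasDerivAt_const x d).sub (hasDerivAt_id x))).div_const 2
    refine h1.congr_deriv ?_
    simp [hK']
    ring
  have hK'd : ∀ x : ℝ, HasDerivAt K' (-1) x := by
    intro x
    have h1 : HasDerivAt (fun y : ℝ => (c + d - 2 * y) / 2) ((0 - 2 * 1) / 2) x := by
      exact ((hasDerivAt_const x (c + d)).sub ((hasDerivAt_id x).const_mul 2)).div_const 2
    convert h1 using 1
    norm_num
  have hGd : ∀ x ∈ Set.Ioo c d, HasDerivAt G (K x * f'' x + f x) x := by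
    intro x hx
    have hx' : x ∈ Set.Ioo a b := hIoo hx
    have hxab : x ∈ Set.Icc a b := Set.Ioo_subset_Icc_self hx'
    have hnhds : Set.Icc a b ∈ nhds x := Icc_mem_nhds hx'.1 hx'.2
    have hfd : HasDerivAt f (f' x) x := (hf x hxab).hasDerivAt hnhds
    have hf'd : HasDerivAt f' (f'' x) x := (hf' x hxab).hasDerivAt hnhds
    have h1 : HasDerivAt G (K' x * f' x + K x * f'' x - ((-1) * f x + K' x * f' x)) x :=
      ((hKd x).mul hf'd).sub ((hK'd x).mul hfd)
    convert h1 using 1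
    ring
  -- continuity of G on Icc c d
  have hKc : Continuous K := by fun_prop
  have hK'c : Continuous K' := by fun_prop
  have hGc : ContinuousOn G (Set.Icc c d) := by
    apply ContinuousOn.sub
    · exact (hKc.continuousOn).mul (hf'c.mono hsub)
    · exact (hK'c.continuousOn).mul (hfc.mono hsub)
  -- integrand continuity / integrability
  have hint : IntervalIntegrable (fun x => K x * f'' x + f x) volume c d := by
    apply ContinuousOn.intervalIntegrable
    rw [Set.uIcc_of_le hcd]
    exact ((hKc.continuousOn).mul (hf''c.mono hsub)).add (hfc.mono hsub)
  have hfint : IntervalIntegrable f volume c d := by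
    apply ContinuousOn.intervalIntegrable
    rw [Set.uIcc_of_le hcd]
    exact hfc.mono hsub
  have hKfint : IntervalIntegrable (fun x => K x * f'' x) volume c d := by
    apply ContinuousOn.intervalIntegrable
    rw [Set.uIcc_of_le hcd]
    exact (hKc.continuousOn).mul (hf''c.mono hsub)
  -- FTC
  have hftc : (∫ x in c..d, (K x * f'' x + f x)) = G d - G c := by
    apply intervalIntegral.integral_eq_sub_of_hasDeriv_right_of_le hcd hGc
    · intro x hx
      exact (hGd x hx).hasDerivWithinAt
    · exact hint
  have hGval : G d - G c = (d - c) / 2 * (f c + f d) := by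
    simp only [hG, hK, hK']
    ring
  have hsplit : (∫ x in c..d, (K x * f'' x + f x))
      = (∫ x in c..d, K x * f'' x) + ∫ x in c..d, f x :=
    intervalIntegral.integral_add hKfint hfint
  have hkey : (∫ x in c..d, f x) - (d - c) / 2 * (f c + f d) = -(∫ x in c..d, K x * f'' x) := by
    rw [← hGval, ← hftc, hsplit]; ring
  rw [hkey, abs_neg]
  -- bound the integral
  have hKint : (∫ x in c..d, K x) = (d - c) ^ 3 / 12 := by
    have hP : ∀ x ∈ Set.uIcc c d,
        HasDerivAt (fun y : ℝ => (-(y ^ 3) / 3 + (c + d) * y ^ 2 / 2 - c * d * y) / 2) (K x) x := by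
      intro x _
      have h1 : HasDerivAt (fun y : ℝ => (-(y ^ 3) / 3 + (c + d) * y ^ 2 / 2 - c * d * y) / 2)
          ((-(↑3 * x ^ 2) / 3 + (c + d) * (↑2 * x ^ 1) / 2 - c * d * 1) / 2) x := by
        exact ((((hasDerivAt_pow 3 x).neg.div_const 3).add
          (((hasDerivAt_pow 2 x).const_mul (c + d)).div_const 2)).sub
          ((hasDerivAt_id' (x := x)).const_mul (c * d))).div_const 2
      convert h1 using 1
      simp [hK]
      ring
    rw [intervalIntegral.integral_eq_sub_of_hasDerivAt hP
      ((hKc.intervalIntegrable c d))]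
    ring
  calc |∫ x in c..d, K x * f'' x| ≤ ∫ x in c..d, |K x * f'' x| :=
        intervalIntegral.abs_integral_le_integral_abs hcd
    _ ≤ ∫ x in c..d, K x * M := by
        apply intervalIntegral.integral_mono_on hcd
        · exact hKfint.abs
        · exact (hKc.mul continuous_const).intervalIntegrable c d
        · intro x hx
          have hx' : x ∈ Set.Icc a b := hsub hx
          have hK0 : 0 ≤ K x := by
            have h1 : (0:ℝ) ≤ x - c := sub_nonneg.2 hx.1
            have h2 : (0:ℝ) ≤ d - x := sub_nonneg.2 hx.2
            simp only [hK]
            positivity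
          rw [abs_mul, abs_of_nonneg hK0]
          exact mul_le_mul_of_nonneg_left (hM x hx') hK0
    _ = (d - c) ^ 3 / 12 * M := by
        rw [intervalIntegral.integral_mul_const, hKint]


/-- Composite trapezoidal rule error on an equidistant grid with `n` subintervals:
`|∫_a^b f − (b−a)/(2n)·[f a + 2 Σ_{i=1}^{n−1} f(a + i(b−a)/n) + f b]|
  ≤ (b−a)³/(12 n²) · sup_{x∈[a,b]} |f''|`. -/
theorem trapezoid_composite_equidistant_error (a b : ℝ) (hab : a < b) (n : ℕ) (hn : 1 ≤ n)
    (f : ℝ → ℝ) (hf : ContDiffOn ℝ 2 f (Set.Icc a b)) :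
    |(∫ x in a..b, f x) -
        (b - a) / (2 * n) *
          (f a + 2 * ∑ i ∈ Finset.Ico 1 n, f (a + i * (b - a) / n) + f b)| ≤
      (b - a) ^ 3 / (12 * n ^ 2) *
        ⨆ x : Set.Icc a b, |iteratedDerivWithin 2 f (Set.Icc a b) x| := by
  have uniq : UniqueDiffOn ℝ (Set.Icc a b) := uniqueDiffOn_Icc hab
  set f' : ℝ → ℝ := derivWithin f (Set.Icc a b) with hf'def
  set f'' : ℝ → ℝ := iteratedDerivWithin 2 f (Set.Icc a b) with hf''def
  have hfc : ContinuousOn f (Set.Icc a b) := hf.continuousOn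
  have hdf : DifferentiableOn ℝ f (Set.Icc a b) := hf.differentiableOn (by norm_num)
  have hf'cd : ContDiffOn ℝ 1 f' (Set.Icc a b) := hf.derivWithin uniq (by norm_num)
  have hf'c : ContinuousOn f' (Set.Icc a b) := hf'cd.continuousOn
  have hf''c : ContinuousOn f'' (Set.Icc a b) :=
    hf.continuousOn_iteratedDerivWithin (by norm_num) uniq
  have heq : ∀ x ∈ Set.Icc a b, f'' x = derivWithin f' (Set.Icc a b) x := by
    intro x hx
    rw [hf''def, show (2:ℕ) = 1 + 1 from rfl, iteratedDerivWithin_succ]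
    exact derivWithin_congr (fun y hy => by rw [iteratedDerivWithin_one])
      (by rw [iteratedDerivWithin_one])
  have hfd : ∀ x ∈ Set.Icc a b, HasDerivWithinAt f (f' x) (Set.Icc a b) x :=
    fun x hx => (hdf x hx).hasDerivWithinAt
  have hf'd : ∀ x ∈ Set.Icc a b, HasDerivWithinAt f' (f'' x) (Set.Icc a b) x := by
    intro x hx
    rw [heq x hx]
    exact ((hf'cd.differentiableOn (by norm_num)) x hx).hasDerivWithinAt
  -- sup bound
  set M : ℝ := ⨆ x : Set.Icc a b, |f'' x| with hMdef
  have hbdd : BddAbove (Set.range fun x : Set.Icc a b => |f'' x|) := by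
    have : (Set.range fun x : Set.Icc a b => |f'' ↑x|) = (fun y => |f'' y|) '' Set.Icc a b := by
      rw [show (fun x : Set.Icc a b => |f'' ↑x|) = (fun y => |f'' y|) ∘ Subtype.val from rfl,
        Set.range_comp, Subtype.range_coe]
    rw [this]
    exact isCompact_Icc.bddAbove_image hf''c.abs
  have hM : ∀ x ∈ Set.Icc a b, |f'' x| ≤ M :=
    fun x hx => le_ciSup hbdd ⟨x, hx⟩
  -- grid
  have hn0 : (0:ℝ) < n := by exact_mod_cast hn
  have hn0' : (n:ℝ) ≠ 0 := ne_of_gt hn0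
  set h : ℝ := (b - a) / n with hhdef
  have hh0 : 0 < h := div_pos (sub_pos.2 hab) hn0
  set x : ℕ → ℝ := fun i => a + i * h with hxdef
  have hxmono : ∀ i j : ℕ, i ≤ j → x i ≤ x j := by
    intro i j hij
    have : (i:ℝ) ≤ j := by exact_mod_cast hij
    simp only [hxdef]
    nlinarith
  have hx0 : x 0 = a := by simp [hxdef]
  have hxn : x n = b := by
    simp only [hxdef, hhdef]
    field_simp
    ring
  have hxab : ∀ i ≤ n, x i ∈ Set.Icc a b := by
    intro i hi
    constructor
    · rw [← hx0]; exact hxmono 0 i (Nat.zero_le i)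
    · rw [← hxn]; exact hxmono i n hi
  have hsub : ∀ i < n, Set.Icc (x i) (x (i+1)) ⊆ Set.Icc a b := by
    intro i hi
    exact Set.Icc_subset_Icc (hxab i (le_of_lt hi)).1 (hxab (i+1) hi).2
  have hstep : ∀ i : ℕ, x (i+1) - x i = h := by
    intro i; simp only [hxdef]; push_cast; ring
  -- split integral
  have hint : ∀ k < n, IntervalIntegrable f volume (x k) (x (k+1)) := by
    intro k hk
    apply ContinuousOn.intervalIntegrable
    rw [Set.uIcc_of_le (hxmono k (k+1) (Nat.le_succ k))]
    exact hfc.mono (hsub k hk)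
  have hsplitInt : (∑ k ∈ Finset.range n, ∫ t in (x k)..(x (k+1)), f t) = ∫ t in a..b, f t := by
    rw [intervalIntegral.sum_integral_adjacent_intervals hint, hx0, hxn]
  -- trapezoid sum identity
  have hsum : (b - a) / (2 * n) *
        (f a + 2 * ∑ i ∈ Finset.Ico 1 n, f (a + i * (b - a) / n) + f b)
      = ∑ i ∈ Finset.range n, h / 2 * (f (x i) + f (x (i+1))) := by
    have hxi : ∀ i : ℕ, a + i * (b - a) / n = x i := by
      intro i; simp only [hxdef, hhdef]; ring
    have e1 : ∑ i ∈ Finset.range n, f (x i) = f a + ∑ i ∈ Finset.Ico 1 n, f (x i) := by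
      rw [Finset.range_eq_Ico, Finset.sum_eq_sum_Ico_succ_bot (by omega : 0 < n)]
      simp [hx0]
    have e2 : ∑ i ∈ Finset.range n, f (x (i+1)) = (∑ i ∈ Finset.Ico 1 n, f (x i)) + f b := by
      have e2a : ∑ i ∈ Finset.Ico 1 (n+1), f (x i) = ∑ i ∈ Finset.range n, f (x (i+1)) := by
        rw [Finset.sum_Ico_eq_sum_range]
        simp [add_comm]
      rw [← e2a, Finset.sum_Ico_succ_top (by omega : 1 ≤ n), hxn]
    have e3 : ∑ i ∈ Finset.range n, h / 2 * (f (x i) + f (x (i+1)))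
        = h / 2 * ((f a + ∑ i ∈ Finset.Ico 1 n, f (x i)) + ((∑ i ∈ Finset.Ico 1 n, f (x i)) + f b)) := by
      rw [← Finset.mul_sum, Finset.sum_add_distrib, e1, e2]
    rw [e3]
    simp only [hxi]
    rw [hhdef]
    field_simp
    ring
  -- combine
  rw [← hsplitInt, hsum, ← Finset.sum_sub_distrib]
  calc |∑ i ∈ Finset.range n, ((∫ t in (x i)..(x (i+1)), f t) - h / 2 * (f (x i) + f (x (i+1))))|
      ≤ ∑ i ∈ Finset.range n, |(∫ t in (x i)..(x (i+1)), f t) - h / 2 * (f (x i) + f (x (i+1)))| :=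
        Finset.abs_sum_le_sum_abs _ _
    _ ≤ ∑ i ∈ Finset.range n, h ^ 3 / 12 * M := by
        apply Finset.sum_le_sum
        intro i hi
        have hi' : i < n := Finset.mem_range.1 hi
        have := trap_single a b f f' f'' (x i) (x (i+1)) (hxmono i (i+1) (Nat.le_succ i))
          (hsub i hi') hfc hf'c hf''c hfd hf'd M hM
        simpa [hstep i] using this
    _ = (n : ℝ) * (h ^ 3 / 12 * M) := by
        rw [Finset.sum_const, Finset.card_range, nsmul_eq_mul]
    _ = (b - a) ^ 3 / (12 * (n:ℝ) ^ 2) * M := by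
        rw [hhdef]
        field_simp
end

section
/- Let A be a p×p real matrix all of whose eigenvalues have strictly negative real parts. Then there exist positive constants α and β such that ‖exp(A t)‖ ≤ β · exp(−α t) for all t ≥ 0. -/
open Matrix

attribute [local instance] Matrix.linftyOpNormedAddCommGroup Matrix.linftyOpNormedRing

attribute [local instance] Matrix.linftyOpNormedAlgebra

open NormedSpace Filter

section HurwitzAux

variable {p : ℕ}

noncomputable def mulVecCLM (x : Fin p → ℂ) :
    Matrix (Fin p) (Fin p) ℂ →L[ℂ] (Fin p → ℂ) :=
  LinearMap.toContinuousLinearMap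
    { toFun := fun M => M *ᵥ x
      map_add' := fun M N => Matrix.add_mulVec M N x
      map_smul' := fun c M => Matrix.smul_mulVec c M x }

lemma hasSum_exp_mulVec (B : Matrix (Fin p) (Fin p) ℂ) (x : Fin p → ℂ) :
    HasSum (fun n => ((n.factorial : ℂ))⁻¹ • (B ^ n *ᵥ x)) (exp B *ᵥ x) := by
  have h := (NormedSpace.exp_series_hasSum_exp' (𝕂 := ℂ) B).mapL (mulVecCLM x)
  simp [mulVecCLM, Matrix.smul_mulVec, LinearMap.toContinuousLinearMap] at h
  exact h

lemma eig_exp_aux (B : Matrix (Fin p) (Fin p) ℂ) (μ lam : ℂ)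
    (hne : Complex.exp μ ≠ lam) (x : Fin p → ℂ) (k : ℕ)
    (hk : ((B - algebraMap ℂ _ μ) ^ k) *ᵥ x = 0)
    (heig : exp B *ᵥ x = lam • x) : x = 0 := by
  set N : Matrix (Fin p) (Fin p) ℂ := B - algebraMap ℂ _ μ with hN
  -- nilpotency on x
  have hnil : ∀ n, k ≤ n → N ^ n *ᵥ x = 0 := by
    intro n hn
    have h1 : N ^ n = N ^ (n - k) * N ^ k := by
      rw [← pow_add]; congr 1; omega
    rw [h1, ← Matrix.mulVec_mulVec, hk, Matrix.mulVec_zero]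
  -- exp B = e^μ • exp N
  have hexp : exp B = Complex.exp μ • exp N := by
    have hBN : B = algebraMap ℂ _ μ + N := by rw [hN]; abel
    have hcomm : Commute (algebraMap ℂ (Matrix (Fin p) (Fin p) ℂ) μ) N :=
      (Algebra.commutes μ N)
    rw [hBN]; erw [NormedSpace.exp_add_of_commute hcomm]; rw [← NormedSpace.algebraMap_exp_comm,
      ← Complex.exp_eq_exp_ℂ, Algebra.smul_def]
    rfl
  -- finite sum formula
  have hsum := hasSum_exp_mulVec N x
  have hfin : exp N *ᵥ x
      = ∑ n ∈ Finset.range k, ((n.factorial : ℂ))⁻¹ • (N ^ n *ᵥ x) := by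
    refine hsum.unique (hasSum_sum_of_ne_finset_zero ?_)
    intro n hn
    rw [hnil n (by simpa using hn), smul_zero]
  have key : lam • x
      = Complex.exp μ • ∑ n ∈ Finset.range k, ((n.factorial : ℂ))⁻¹ • (N ^ n *ᵥ x) := by
    rw [← hfin, ← Matrix.smul_mulVec, ← hexp, heig]
  -- downward induction
  have claim : ∀ m : ℕ, ∀ n : ℕ, k - m ≤ n → N ^ n *ᵥ x = 0 := by
    intro m
    induction m with
    | zero => intro n hn; exact hnil n (by omega)
    | succ m ih =>
      intro n hn
      rcases le_or_gt (k - m) n with h | h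
      · exact ih n h
      have hterm : ∀ i : ℕ, 1 ≤ i → N ^ (n + i) *ᵥ x = 0 := by
        intro i hi; exact ih (n + i) (by omega)
      have happ : lam • (N ^ n *ᵥ x) = Complex.exp μ • (N ^ n *ᵥ x) := by
        have h2 := congrArg (fun v => N ^ n *ᵥ v) key
        simp only [Matrix.mulVec_smul] at h2
        have h3 : N ^ n *ᵥ (∑ i ∈ Finset.range k, ((i.factorial : ℂ))⁻¹ • (N ^ i *ᵥ x))
            = ∑ i ∈ Finset.range k, ((i.factorial : ℂ))⁻¹ • (N ^ (n + i) *ᵥ x) := by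
          rw [← Matrix.mulVecLin_apply, map_sum]
          refine Finset.sum_congr rfl fun i _ => ?_
          rw [_root_.map_smul, Matrix.mulVecLin_apply, Matrix.mulVec_mulVec, ← pow_add]
        have h4 : ∑ i ∈ Finset.range k, ((i.factorial : ℂ))⁻¹ • (N ^ (n + i) *ᵥ x)
            = N ^ n *ᵥ x := by
          rw [Finset.sum_eq_single_of_mem 0 (Finset.mem_range.mpr (by omega))]
          · simp
          · intro i _ hi
            rw [hterm i (by omega), smul_zero]
        rw [h2, h3, h4]
      have : (lam - Complex.exp μ) • (N ^ n *ᵥ x) = 0 := by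
        rw [sub_smul, happ, sub_self]
      rcases smul_eq_zero.mp this with h0 | h0
      · exact absurd (sub_eq_zero.mp h0).symm hne
      · exact h0
  have := claim k 0 (by omega)
  simpa using this

lemma spectrum_exp_subset (B : Matrix (Fin p) (Fin p) ℂ) :
    spectrum ℂ (exp B) ⊆ Complex.exp '' spectrum ℂ B := by
  intro lam hlam
  by_contra hcon
  have hne : ∀ μ ∈ spectrum ℂ B, Complex.exp μ ≠ lam := by
    intro μ hμ h; exact hcon ⟨μ, hμ, h⟩
  set C : Matrix (Fin p) (Fin p) ℂ := algebraMap ℂ _ lam - exp B with hC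
  set e : Matrix (Fin p) (Fin p) ℂ ≃ₐ[ℂ] Module.End ℂ (Fin p → ℂ) :=
    Matrix.toLinAlgEquiv' (n := Fin p) (R := ℂ) with he
  -- application formula
  have happly : ∀ (M : Matrix (Fin p) (Fin p) ℂ) (v : Fin p → ℂ), e M v = M *ᵥ v := by
    intro M v; rfl
  have hCapply : ∀ v : Fin p → ℂ, e C v = lam • v - exp B *ᵥ v := by
    intro v
    rw [happly, hC, Matrix.sub_mulVec]
    congr 1
    rw [Matrix.algebraMap_eq_diagonal]
    ext i
    rw [Matrix.mulVec_diagonal]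
    simp [Pi.algebraMap_apply, Algebra.algebraMap_self_apply]
  -- commutation
  have hcommM : Commute B C := by
    have h1 : Commute B (algebraMap ℂ (Matrix (Fin p) (Fin p) ℂ) lam) :=
      (Algebra.commutes lam B).symm
    have h2 : Commute B (exp B) := (Commute.refl B).exp_right
    exact h1.sub_right h2
  have hcomm : Commute (e B) (e C) := hcommM.map e
  -- surjectivity on each generalized eigenspace
  have hsurj : Function.Surjective (e C) := by
    rw [← LinearMap.range_eq_top, ← top_le_iff,
      ← Module.End.iSup_maxGenEigenspace_eq_top (e B)]
    refine iSup_le fun μ => ?_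
    by_cases hbot : (e B).maxGenEigenspace μ = ⊥
    · rw [hbot]; exact bot_le
    · have hev : (e B).HasEigenvalue μ := by
        rw [Module.End.maxGenEigenspace_eq] at hbot
        exact Module.End.hasEigenvalue_of_hasGenEigenvalue hbot
      have hμspec : μ ∈ spectrum ℂ B := by
        rw [← AlgEquiv.spectrum_eq e B]
        exact Module.End.hasEigenvalue_iff_mem_spectrum.mp hev
      have hlne := hne μ hμspec
      have hmaps : Set.MapsTo (e C) ((e B).maxGenEigenspace μ)
          ((e B).maxGenEigenspace μ) :=
        Module.End.mapsTo_maxGenEigenspace_of_comm hcomm μ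
      have hzero : ∀ z ∈ (e B).maxGenEigenspace μ, e C z = 0 → z = 0 := by
        intro z hz hez
        rw [Module.End.mem_maxGenEigenspace] at hz
        obtain ⟨k, hk⟩ := hz
        have hnil : ((B - algebraMap ℂ _ μ) ^ k) *ᵥ z = 0 := by
          have : e ((B - algebraMap ℂ _ μ) ^ k) z = 0 := by
            rw [map_pow, map_sub, AlgEquiv.commutes,
              Module.algebraMap_end_eq_smul_id]
            exact hk
          rwa [happly] at this
        have heig : exp B *ᵥ z = lam • z := by
          have := hCapply z
          rw [hez] at this
          exact (sub_eq_zero.mp this.symm).symm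
        exact eig_exp_aux B μ lam hlne z k hnil heig
      have hinj : Function.Injective ((e C).restrict hmaps) := by
        intro a b hab
        have h1 : e C (a : Fin p → ℂ) = e C (b : Fin p → ℂ) := by
          have := congrArg (Subtype.val) hab
          exact this
        have h2 : e C ((a : Fin p → ℂ) - b) = 0 := by
          rw [map_sub, h1, sub_self]
        have h3 := hzero _ (Submodule.sub_mem _ a.2 b.2) h2
        exact Subtype.ext (sub_eq_zero.mp h3)
      have hsurjW := (LinearMap.injective_iff_surjective).mp hinj
      intro y hy
      obtain ⟨x, hx⟩ := hsurjW ⟨y, hy⟩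
      refine ⟨x, ?_⟩
      have := congrArg Subtype.val hx
      exact this
  have hbij : Function.Bijective (e C) :=
    ⟨(LinearMap.injective_iff_surjective).mpr hsurj, hsurj⟩
  have hunit : IsUnit C := by
    have h1 : IsUnit (e C) := (Module.End.isUnit_iff (e C)).mpr hbij
    have h2 := h1.map e.symm
    rwa [AlgEquiv.symm_apply_apply] at h2
  exact (spectrum.notMem_iff.mpr hunit) hlam

-- norm transfer
lemma norm_map_ofReal (M : Matrix (Fin p) (Fin p) ℝ) :
    ‖M.map Complex.ofReal‖ = ‖M‖ := by
  rw [Matrix.linfty_opNorm_def, Matrix.linfty_opNorm_def]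
  norm_cast
  congr 1
  funext i
  refine Finset.sum_congr rfl fun j _ => ?_
  rw [Matrix.map_apply, Complex.nnnorm_real]

lemma map_ofReal_exp (M : Matrix (Fin p) (Fin p) ℝ) :
    (exp M).map Complex.ofReal = exp (M.map Complex.ofReal) := by
  have hlin : IsLinearMap ℝ (fun M : Matrix (Fin p) (Fin p) ℝ => M.map Complex.ofReal) := by
    constructor
    · intro a b; ext i j; simp [Matrix.map_apply]
    · intro c a; ext i j; simp [Matrix.map_apply]
  have hc : Continuous (fun M : Matrix (Fin p) (Fin p) ℝ => M.map Complex.ofReal) :=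
    (hlin.mk' _).continuous_of_finiteDimensional
  have h := NormedSpace.map_exp
    (Complex.ofRealHom.mapMatrix : Matrix (Fin p) (Fin p) ℝ →+* Matrix (Fin p) (Fin p) ℂ)
    (by exact hc) M
  simp [RingHom.mapMatrix_apply] at h
  exact h

-- geometric bound on powers
lemma pow_norm_bound (B : Matrix (Fin p) (Fin p) ℂ) (α : ℝ) (hα : 0 < α)
    (hs : ∀ μ ∈ spectrum ℂ B, μ.re ≤ -(2*α)) :
    ∃ C : ℝ, 1 ≤ C ∧ ∀ n : ℕ, ‖exp B ^ n‖ ≤ C * Real.exp (-α * n) := by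
  have hsr : spectralRadius ℂ (exp B) ≤ ENNReal.ofReal (Real.exp (-(2*α))) := by
    rw [spectralRadius]
    refine iSup₂_le fun lam hlam => ?_
    obtain ⟨μ, hμ, rfl⟩ := spectrum_exp_subset B hlam
    rw [← ENNReal.ofReal_coe_nnreal, coe_nnnorm, Complex.norm_exp]
    exact ENNReal.ofReal_le_ofReal (Real.exp_le_exp.mpr (hs μ hμ))
  have hlt : spectralRadius ℂ (exp B) < ENNReal.ofReal (Real.exp (-α)) :=
    lt_of_le_of_lt hsr (ENNReal.ofReal_lt_ofReal_iff (Real.exp_pos _) |>.mpr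
      (Real.exp_lt_exp.mpr (by linarith)))
  have htends := spectrum.pow_norm_pow_one_div_tendsto_nhds_spectralRadius (exp B)
  have hev := htends.eventually_lt_const hlt
  obtain ⟨n₀, hn₀⟩ := eventually_atTop.mp hev
  have hgeo : ∀ n : ℕ, n₀ ≤ n → 1 ≤ n → ‖exp B ^ n‖ ≤ Real.exp (-α * n) := by
    intro n hn h1
    have h2 := hn₀ n hn
    have h3 : ‖exp B ^ n‖ ^ (1 / (n:ℝ)) < Real.exp (-α) := by
      have := (ENNReal.ofReal_lt_ofReal_iff (Real.exp_pos _)).mp h2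
      exact this
    have h4 : ‖exp B ^ n‖ = (‖exp B ^ n‖ ^ (1/(n:ℝ))) ^ (n:ℕ) := by
      rw [← Real.rpow_natCast (_ ^ (1/(n:ℝ))) n, ← Real.rpow_mul (norm_nonneg _),
        one_div, inv_mul_cancel₀ (by exact_mod_cast by omega), Real.rpow_one]
    rw [h4]
    calc (‖exp B ^ n‖ ^ (1/(n:ℝ))) ^ (n:ℕ)
        ≤ (Real.exp (-α)) ^ (n:ℕ) :=
          pow_le_pow_left₀ (Real.rpow_nonneg (norm_nonneg _) _) h3.le n
      _ = Real.exp (-α * n) := by rw [← Real.exp_nat_mul, mul_comm]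
  set C : ℝ := 1 + ∑ n ∈ Finset.range (n₀ + 1), ‖exp B ^ n‖ * Real.exp (α * n) with hCdef
  have hCpos : 1 ≤ C := by
    have : 0 ≤ ∑ n ∈ Finset.range (n₀ + 1), ‖exp B ^ n‖ * Real.exp (α * n) :=
      Finset.sum_nonneg fun n _ => mul_nonneg (norm_nonneg _) (Real.exp_pos _).le
    linarith
  refine ⟨C, hCpos, fun n => ?_⟩
  rcases lt_or_ge n (n₀ + 1) with h | h
  · have hmem : n ∈ Finset.range (n₀ + 1) := Finset.mem_range.mpr h
    have h5 : ‖exp B ^ n‖ * Real.exp (α * n) ≤ C := by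
      rw [hCdef]
      have := Finset.single_le_sum
        (f := fun i : ℕ => ‖exp B ^ i‖ * Real.exp (α * (i:ℝ)))
        (fun i _ => mul_nonneg (norm_nonneg _) (Real.exp_pos _).le) hmem
      linarith
    calc ‖exp B ^ n‖ = (‖exp B ^ n‖ * Real.exp (α * n)) * Real.exp (-α * n) := by
          rw [mul_assoc, ← Real.exp_add, show α * (n:ℝ) + -α * n = 0 by ring,
            Real.exp_zero, mul_one]
      _ ≤ C * Real.exp (-α * n) := by
          apply mul_le_mul_of_nonneg_right h5 (Real.exp_pos _).le
  · rcases Nat.eq_zero_or_pos n with rfl | hpos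
    · omega
    calc ‖exp B ^ n‖ ≤ Real.exp (-α * n) := hgeo n (by omega) hpos
      _ ≤ C * Real.exp (-α * n) := by nlinarith [Real.exp_pos (-α * (n:ℝ))]

end HurwitzAux

/-- If all (complex) eigenvalues of the real matrix `A` have strictly negative real part
(Hurwitz matrix), then there are positive constants `α, β` with
`‖exp (t • A)‖ ≤ β · exp (−α t)` for all `t ≥ 0`. -/
theorem hurwitz_matrix_exp_decay (p : ℕ) (A : Matrix (Fin p) (Fin p) ℝ)
    (hA : ∀ μ ∈ spectrum ℂ (A.map (Complex.ofReal)), μ.re < 0) :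
    ∃ α β : ℝ, 0 < α ∧ 0 < β ∧
      ∀ t : ℝ, 0 ≤ t → ‖NormedSpace.exp (t • A)‖ ≤ β * Real.exp (-α * t) := by
  rcases Nat.eq_zero_or_pos p with rfl | hp
  · refine ⟨1, 1, one_pos, one_pos, fun t ht => ?_⟩
    have h0 : NormedSpace.exp (t • A) = 0 := by
      ext i j; exact i.elim0
    rw [h0, norm_zero, one_mul]
    positivity
  · haveI : Nonempty (Fin p) := ⟨⟨0, hp⟩⟩
    set Ac := A.map (Complex.ofReal) with hAc
    have hne : (spectrum ℂ Ac).Nonempty := spectrum.nonempty Ac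
    obtain ⟨μ₀, hμ₀, hmax⟩ := (spectrum.isCompact (𝕜 := ℂ) Ac).exists_isMaxOn hne
      (Complex.continuous_re.continuousOn)
    set α : ℝ := -μ₀.re / 2 with hαdef
    have hα : 0 < α := by
      have := hA μ₀ hμ₀
      rw [hαdef]; linarith
    have hsb : ∀ μ ∈ spectrum ℂ Ac, μ.re ≤ -(2*α) := by
      intro μ hμ
      have := isMaxOn_iff.mp hmax μ hμ
      rw [hαdef] at *
      linarith
    obtain ⟨C, hC1, hC⟩ := pow_norm_bound Ac α hα hsb
    have hcont : Continuous (fun x : ℝ => ‖exp (x • Ac)‖) :=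
      (NormedSpace.exp_continuous.comp (continuous_id.smul continuous_const)).norm
    obtain ⟨s₀, hs₀mem, hD'⟩ := (isCompact_Icc (a := (0:ℝ)) (b := 1)).exists_isMaxOn
      ⟨0, by constructor <;> norm_num⟩ hcont.continuousOn
    have hD := isMaxOn_iff.mp hD'
    set D : ℝ := max ‖exp (s₀ • Ac)‖ 1 with hDdef
    have hD1 : (1:ℝ) ≤ D := le_max_right _ _
    have hD0 : (0:ℝ) < D := lt_of_lt_of_le one_pos hD1
    have hCpos : (0:ℝ) < C := lt_of_lt_of_le one_pos hC1
    refine ⟨α, D * C * Real.exp α, hα, mul_pos (mul_pos hD0 hCpos) (Real.exp_pos _), fun t ht => ?_⟩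
    have hmapsmul : (t • A).map Complex.ofReal = t • Ac := by
      ext i j
      simp [Matrix.map_apply, hAc, Matrix.smul_apply, Complex.real_smul]
    have htrans : ‖NormedSpace.exp (t • A)‖ = ‖exp (t • Ac)‖ := by
      rw [← norm_map_ofReal (NormedSpace.exp (t • A)), map_ofReal_exp, hmapsmul]
    rw [htrans]
    set n : ℕ := ⌊t⌋₊ with hn
    set s : ℝ := t - n with hs
    have hs0 : 0 ≤ s := by
      rw [hs]; have := Nat.floor_le ht; rw [hn]; linarith
    have hs1 : s ≤ 1 := by
      have h2 := Nat.lt_floor_add_one t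
      rw [hs, hn]; push_cast at h2 ⊢; linarith
    have hsplit : t • Ac = s • Ac + (n:ℝ) • Ac := by
      rw [← add_smul]; congr 1; rw [hs]; ring
    have hcomm : Commute (s • Ac) ((n:ℝ) • Ac) :=
      ((Commute.refl Ac).smul_left _).smul_right _
    have hexp : exp (t • Ac) = exp (s • Ac) * exp Ac ^ n := by
      rw [hsplit]; erw [NormedSpace.exp_add_of_commute hcomm]
      congr 1
      rw [show ((n:ℝ) • Ac) = n • Ac from (Nat.cast_smul_eq_nsmul ℝ n Ac)]
      exact NormedSpace.exp_nsmul ..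
    calc ‖exp (t • Ac)‖ ≤ ‖exp (s • Ac)‖ * ‖exp Ac ^ n‖ := by
          rw [hexp]; exact norm_mul_le _ _
      _ ≤ D * (C * Real.exp (-α * n)) := by
          refine mul_le_mul (le_trans (hD s ⟨hs0, hs1⟩) (le_max_left _ _)) (hC n)
            (norm_nonneg _) (by linarith)
      _ = D * C * (Real.exp (α * s) * Real.exp (-α * t)) := by
          rw [← Real.exp_add, show α * s + -α * t = -α * (n:ℝ) by rw [hs]; ring]
          ring
      _ ≤ D * C * (Real.exp α * Real.exp (-α * t)) := by
          have h3 : Real.exp (α * s) ≤ Real.exp α :=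
            Real.exp_le_exp.mpr (by nlinarith)
          have h4 : (0:ℝ) < Real.exp (-α * t) := Real.exp_pos _
          have h5 := mul_le_mul_of_nonneg_left
            (mul_le_mul_of_nonneg_right h3 h4.le) (le_of_lt (mul_pos hD0 hCpos))
          linarith
      _ = D * C * Real.exp α * Real.exp (-α * t) := by ring
end
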